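/- Let z₁, z₂, z₃ be pairwise distinct complex numbers with Im j(z₁, z₂, z₃) ≠ 0, and let (a, b, c) be the labeling of the three points ordered by increasing lengths of the opposite sides, i.e., |b−c| < |c−a| < |a−b| (such a strict ordering exists since the side lengths are pairwise distinct when j is not real). Then Im j(z₁, z₂, z₃) > 0 if and only if Im((c−a)/(b−a)) > 0, i.e., if and only if the ordered triple (a, b, c) is positively oriented in ℂ. -/

import Mathlib

open Complex

/-- The j-invariant as a function of the cross-ratio. -/
noncomputable def Jfun (l : ℂ) : ℂ := 4 * (l ^ 2 - l + 1) ^ 3 / (27 * l ^ 2 * (l - 1) ^ 2)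

/-- The cross-ratio of four points of `ℂ`. -/
noncomputable def crossRatio (z1 z2 z3 z4 : ℂ) : ℂ :=
  ((z1 - z3) / (z2 - z3)) * ((z2 - z4) / (z1 - z4))

/-- The j-invariant of a quadruple of points of `ℂ`. -/
noncomputable def jInv4 (z1 z2 z3 z4 : ℂ) : ℂ := Jfun (crossRatio z1 z2 z3 z4)

/-- The j-invariant of a triple of points of `ℂ` (fourth point at infinity). -/
noncomputable def jInv3 (z1 z2 z3 : ℂ) : ℂ := Jfun ((z1 - z3) / (z2 - z3))

lemma Jden_ne (l : ℂ) (h0 : l ≠ 0) (h1 : l ≠ 1) : (27 * l ^ 2 * (l - 1) ^ 2 : ℂ) ≠ 0 :=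
  mul_ne_zero (mul_ne_zero (by norm_num) (pow_ne_zero _ h0))
    (pow_ne_zero _ (sub_ne_zero.mpr h1))

lemma Jfun_inv (l : ℂ) (h0 : l ≠ 0) (h1 : l ≠ 1) : Jfun (1/l) = Jfun l := by
  have h1' : l - 1 ≠ 0 := sub_ne_zero.mpr h1
  have e0 : (1/l : ℂ) ≠ 0 := by simpa using h0
  have e1 : (1/l : ℂ) ≠ 1 := fun h => h1 ((div_eq_one_iff_eq h0).mp h).symm
  unfold Jfun
  rw [div_eq_div_iff (Jden_ne _ e0 e1) (Jden_ne _ h0 h1)]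
  field_simp
  ring

lemma Jfun_one_sub (l : ℂ) (h0 : l ≠ 0) (h1 : l ≠ 1) : Jfun (1 - l) = Jfun l := by
  have e0 : (1 - l : ℂ) ≠ 0 := sub_ne_zero.mpr (Ne.symm h1)
  have e1 : (1 - l : ℂ) ≠ 1 := by
    intro h; exact h0 (by linear_combination -h)
  unfold Jfun
  rw [div_eq_div_iff (Jden_ne _ e0 e1) (Jden_ne _ h0 h1)]
  ring

lemma Jfun_div_sub_one (l : ℂ) (h0 : l ≠ 0) (h1 : l ≠ 1) : Jfun (l / (l - 1)) = Jfun l := by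
  have h1' : l - 1 ≠ 0 := sub_ne_zero.mpr h1
  have e0 : (l / (l - 1) : ℂ) ≠ 0 := div_ne_zero h0 h1'
  have e1 : (l / (l - 1) : ℂ) ≠ 1 := by
    intro h
    rw [div_eq_one_iff_eq h1'] at h
    exact one_ne_zero (by linear_combination h)
  unfold Jfun
  rw [div_eq_div_iff (Jden_ne _ e0 e1) (Jden_ne _ h0 h1)]
  field_simp
  ring

lemma jInv3_swap12 (u v w : ℂ) (huv : u ≠ v) (huw : u ≠ w) (hvw : v ≠ w) :
    jInv3 u v w = jInv3 v u w := by
  have hvw' : v - w ≠ 0 := sub_ne_zero.mpr hvw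
  have huw' : u - w ≠ 0 := sub_ne_zero.mpr huw
  have h0 : (u - w)/(v - w) ≠ 0 := div_ne_zero huw' hvw'
  have h1 : (u - w)/(v - w) ≠ 1 := by
    intro h; rw [div_eq_one_iff_eq hvw'] at h; exact huv (by linear_combination h)
  unfold jInv3
  rw [← Jfun_inv _ h0 h1, one_div_div]

lemma jInv3_swap23 (u v w : ℂ) (huv : u ≠ v) (huw : u ≠ w) (hvw : v ≠ w) :
    jInv3 u v w = jInv3 u w v := by
  have hvw' : v - w ≠ 0 := sub_ne_zero.mpr hvw
  have hwv' : w - v ≠ 0 := sub_ne_zero.mpr hvw.symm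
  have h0 : (u - w)/(v - w) ≠ 0 := div_ne_zero (sub_ne_zero.mpr huw) hvw'
  have h1 : (u - w)/(v - w) ≠ 1 := by
    intro h; rw [div_eq_one_iff_eq hvw'] at h; exact huv (by linear_combination h)
  unfold jInv3
  rw [← Jfun_one_sub _ h0 h1]
  congr 1
  field_simp
  ring

lemma key (t : ℂ) (h1 : ‖1 - t‖ < ‖t‖) (h2 : ‖t‖ < 1) :
    (0 < (Jfun t).im ↔ 0 < t.im) := by
  set x := t.re with hx
  set y := t.im with hy
  have ht0 : t ≠ 0 := by rintro rfl; norm_num at h1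
  have ht1 : t ≠ 1 := by rintro rfl; norm_num at h2
  have hA : x ^ 2 + y ^ 2 < 1 := by
    have h := Complex.sq_norm t
    rw [Complex.normSq_apply] at h
    nlinarith [norm_nonneg t]
  have hB : (1 - x) ^ 2 + y ^ 2 < x ^ 2 + y ^ 2 := by
    have e1 := Complex.sq_norm (1 - t)
    have e2 := Complex.sq_norm t
    rw [Complex.normSq_apply] at e1 e2
    simp only [Complex.sub_re, Complex.sub_im, Complex.one_re, Complex.one_im] at e1
    nlinarith [norm_nonneg t, norm_nonneg (1 - t)]
  have hx2 : (1:ℝ)/2 < x := by nlinarith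
  have hC : x ^ 2 + y ^ 2 - 2 * x < 0 := by nlinarith
  have hM : (27 * t ^ 2 * (t - 1) ^ 2 : ℂ) ≠ 0 :=
    mul_ne_zero (mul_ne_zero (by norm_num) (pow_ne_zero _ ht0))
      (pow_ne_zero _ (sub_ne_zero.mpr ht1))
  have hnsq : 0 < Complex.normSq (27 * t ^ 2 * (t - 1) ^ 2) := Complex.normSq_pos.mpr hM
  have hIm : (Jfun t).im = (108 * (y * (2 * x - 1)) *
      ((x ^ 2 + y ^ 2 - 1) * (x ^ 2 + y ^ 2 - 2 * x) *
        ((x ^ 2 + y ^ 2 - x) ^ 2 + 2 * (x - 1/2) ^ 2 + 3 * y ^ 2 + 1/2))) /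
      Complex.normSq (27 * t ^ 2 * (t - 1) ^ 2) := by
    rw [Jfun, Complex.div_im, ← sub_div]
    congr 1
    simp only [pow_succ, pow_zero, one_mul, Complex.mul_re, Complex.mul_im, Complex.sub_re,
      Complex.sub_im, Complex.add_re, Complex.add_im, Complex.one_re, Complex.one_im,
      Complex.re_ofNat, Complex.im_ofNat, ← hx, ← hy]
    ring
  have hG : 0 < (x ^ 2 + y ^ 2 - x) ^ 2 + 2 * (x - 1/2) ^ 2 + 3 * y ^ 2 + 1/2 := by positivity
  have hF : 0 < (x ^ 2 + y ^ 2 - 1) * (x ^ 2 + y ^ 2 - 2 * x) *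
      ((x ^ 2 + y ^ 2 - x) ^ 2 + 2 * (x - 1/2) ^ 2 + 3 * y ^ 2 + 1/2) :=
    mul_pos (mul_pos_of_neg_of_neg (by linarith) (by linarith)) hG
  rw [hIm]
  constructor
  · intro h
    have h' : 0 < 108 * (y * (2 * x - 1)) *
        ((x ^ 2 + y ^ 2 - 1) * (x ^ 2 + y ^ 2 - 2 * x) *
          ((x ^ 2 + y ^ 2 - x) ^ 2 + 2 * (x - 1/2) ^ 2 + 3 * y ^ 2 + 1/2)) := by
      rcases div_pos_iff.mp h with ⟨h, -⟩ | ⟨-, h⟩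
      · exact h
      · linarith
    rcases mul_pos_iff.mp h' with ⟨ha, -⟩ | ⟨-, hb⟩
    · nlinarith
    · linarith
  · intro hy0
    exact div_pos (mul_pos (mul_pos (by norm_num)
      (mul_pos hy0 (by linarith : (0:ℝ) < 2 * x - 1))) hF) hnsq

lemma main_aux (a b c : ℂ)
    (hlt1 : ‖b - c‖ < ‖c - a‖)
    (hlt2 : ‖c - a‖ < ‖a - b‖) :
    0 < (jInv3 a b c).im ↔ 0 < ((c - a) / (b - a)).im := by
  have hca : c - a ≠ 0 := by
    intro h; rw [h] at hlt1; simp at hlt1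
    exact (norm_nonneg _).not_gt hlt1
  have hab : a - b ≠ 0 := by
    intro h; rw [h] at hlt2; simp at hlt2
    exact (norm_nonneg _).not_gt hlt2
  have hba : b - a ≠ 0 := fun h => hab (by linear_combination -h)
  set t := (c - a) / (b - a) with ht
  have ht0 : t ≠ 0 := div_ne_zero hca hba
  have h2 : ‖t‖ < 1 := by
    rw [ht, norm_div, div_lt_one (norm_pos_iff.mpr hba)]
    calc ‖c - a‖ < ‖a - b‖ := hlt2
    _ = ‖b - a‖ := norm_sub_rev a b
  have ht1 : t ≠ 1 := by
    intro h; rw [h] at h2; simp at h2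
  have e : (1:ℂ) - t = (b - c) / (b - a) := by
    rw [ht]; field_simp
    ring
  have hbc : b - c ≠ 0 := by
    intro h
    apply ht1
    have h0 : (1:ℂ) - t = 0 := by rw [e, h, zero_div]
    linear_combination -h0
  have h1t : ‖1 - t‖ < ‖t‖ := by
    rw [e, ht, norm_div, norm_div]
    exact (div_lt_div_iff_of_pos_right (norm_pos_iff.mpr hba)).mpr hlt1
  have ht1' : t - 1 ≠ 0 := sub_ne_zero.mpr ht1
  have e2 : (a - c) / (b - c) = t / (t - 1) := by
    rw [div_eq_div_iff hbc ht1', ht]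
    field_simp
    ring
  rw [show jInv3 a b c = Jfun ((a - c)/(b - c)) from rfl, e2, Jfun_div_sub_one t ht0 ht1]
  exact key t h1t h2

theorem jInv3_im_pos_iff_orientation (z1 z2 z3 a b c : ℂ)
    (h12 : z1 ≠ z2) (h13 : z1 ≠ z3) (h23 : z2 ≠ z3)
    (him : (jInv3 z1 z2 z3).im ≠ 0)
    (hset : ({a, b, c} : Set ℂ) = ({z1, z2, z3} : Set ℂ))
    (hlt1 : ‖b - c‖ < ‖c - a‖)
    (hlt2 : ‖c - a‖ < ‖a - b‖) :
    0 < (jInv3 z1 z2 z3).im ↔ 0 < ((c - a) / (b - a)).im := by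
  have h1' : z1 = a ∨ z1 = b ∨ z1 = c := by
    have : z1 ∈ ({a, b, c} : Set ℂ) := by rw [hset]; simp
    simpa using this
  have h2' : z2 = a ∨ z2 = b ∨ z2 = c := by
    have : z2 ∈ ({a, b, c} : Set ℂ) := by rw [hset]; simp
    simpa using this
  have h3' : z3 = a ∨ z3 = b ∨ z3 = c := by
    have : z3 ∈ ({a, b, c} : Set ℂ) := by rw [hset]; simp
    simpa using this
  rcases h1' with rfl | rfl | rfl <;> rcases h2' with rfl | rfl | rfl <;>
      rcases h3' with rfl | rfl | rfl <;>
    first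
    | exact absurd rfl h12
    | exact absurd rfl h13
    | exact absurd rfl h23
    | skip
  · exact main_aux z1 z2 z3 hlt1 hlt2
  · rw [jInv3_swap23 z1 z2 z3 h12 h13 h23]
    exact main_aux z1 z3 z2 hlt1 hlt2
  · rw [jInv3_swap12 z1 z2 z3 h12 h13 h23]
    exact main_aux z2 z1 z3 hlt1 hlt2
  · rw [jInv3_swap23 z1 z2 z3 h12 h13 h23, jInv3_swap12 z1 z3 z2 h13 h12 h23.symm]
    exact main_aux z3 z1 z2 hlt1 hlt2
  · rw [jInv3_swap12 z1 z2 z3 h12 h13 h23, jInv3_swap23 z2 z1 z3 h12.symm h23 h13]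
    exact main_aux z2 z3 z1 hlt1 hlt2
  · rw [jInv3_swap23 z1 z2 z3 h12 h13 h23, jInv3_swap12 z1 z3 z2 h13 h12 h23.symm,
      jInv3_swap23 z3 z1 z2 h13.symm h23.symm h12]
    exact main_aux z3 z2 z1 hlt1 hlt2
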